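/- Let (Ω, F, P) be a probability space, K ≥ 1, and X : Ω → (Π_{k=1}^K Fin d_k) → ℝ a random order-K tensor with square-integrable entries and E[X] = 0. For vectors u_k ∈ ℝ^{d_k}, define the multilinear contraction ⟨X; u₁, …, u_K⟩ := Σ_{i₁, …, i_K} X(i₁, …, i_K)·Π_k u_k(i_k), and for matrices U_k ∈ Matrix (Fin d_k) (Fin r_k) ℝ define the reduced tensor W : Ω → (Π_k Fin r_k) → ℝ by W(j₁, …, j_K) := Σ_{i₁, …, i_K} X(i₁, …, i_K)·Π_k (U_k)_{i_k j_k}, with m := σ(W). Let Y : Ω → ℝ, Ỹ := 1{Y ∈ A₁} − 1{Y ∈ A₂} for disjoint measurable A₁, A₂, λ ≥ 0, and L(u₁, …, u_K, t) := Var(⟨X; u₁, …, u_K⟩) + λ·E[(1 − Ỹ(⟨X; u₁, …, u_K⟩ − t))₊]. Fix (u₁, …, u_K, t), assume Y and X are conditionally independent given m, and assume there exist η_k ∈ ℝ^{r_k}, k = 1, …, K, with E[⟨X; u₁, …, u_K⟩ | m] = ⟨X; U₁η₁, …, U_Kη_K⟩ almost surely. Then L(u₁, …, u_K, t) ≥ L(U₁η₁,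 …, U_Kη_K, t), with strict inequality if additionally E[(⟨X; u₁, …, u_K⟩ − E[⟨X; u₁, …, u_K⟩ | m])²] > 0. -/

import Mathlib

open MeasureTheory ProbabilityTheory

noncomputable section

/-- The multilinear contraction `⟨T; u₁, …, u_K⟩ = Σ_{i₁,…,i_K} T(i) ∏ₖ u_k(i_k)`,
i.e. `T ×₁ u₁ ×₂ ⋯ ×_K u_K`. -/
def tcontract {K : ℕ} {d : Fin K → ℕ} (T : ((k : Fin K) → Fin (d k)) → ℝ)
    (u : (k : Fin K) → Fin (d k) → ℝ) : ℝ :=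
  ∑ i : (k : Fin K) → Fin (d k), T i * ∏ k, u k (i k)

/-- The reduced tensor `W = T ×₁ U₁ᵀ ×₂ ⋯ ×_K U_Kᵀ`, i.e.
`W(j₁,…,j_K) = Σ_{i₁,…,i_K} T(i) ∏ₖ (U_k)_{i_k j_k}`. -/
def reduceTensor {K : ℕ} {d r : Fin K → ℕ} (T : ((k : Fin K) → Fin (d k)) → ℝ)
    (U : (k : Fin K) → Matrix (Fin (d k)) (Fin (r k)) ℝ) :
    ((k : Fin K) → Fin (r k)) → ℝ :=
  fun j => ∑ i : (k : Fin K) → Fin (d k), T i * ∏ k, U k (i k) (j k)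

/-- The sliced response `Ỹ = 1{Y ∈ A₁} − 1{Y ∈ A₂}`. -/
def sliceLabel {Ω : Type*} (A₁ A₂ : Set ℝ) (Y : Ω → ℝ) (ω : Ω) : ℝ :=
  A₁.indicator 1 (Y ω) - A₂.indicator 1 (Y ω)

/-- The population PSTM objective
`L(u₁,…,u_K,t) = Var(⟨X; u₁,…,u_K⟩) + λ·E[(1 − Ỹ(⟨X; u₁,…,u_K⟩ − t))₊]`. -/
def PSTMobj {Ω : Type*} [MeasurableSpace Ω] {K : ℕ} {d : Fin K → ℕ} (μ : Measure Ω)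
    (X : Ω → ((k : Fin K) → Fin (d k)) → ℝ) (Ytil : Ω → ℝ) (lam : ℝ)
    (u : (k : Fin K) → Fin (d k) → ℝ) (t : ℝ) : ℝ :=
  variance (fun ω => tcontract (X ω) u) μ
    + lam * ∫ ω, max (1 - Ytil ω * (tcontract (X ω) u - t)) 0 ∂μ

/-- Conditional independence of `Y` and `X` given a sub-σ-algebra `m`:
for all bounded measurable `g, h`, `E[g(Y)h(X) | m] = E[g(Y)|m] ⬝ E[h(X)|m]` a.s. -/
def CondIndepBdd {Ω α : Type*} [MeasurableSpace Ω] [MeasurableSpace α]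
    (μ : Measure Ω) (m : MeasurableSpace Ω) (Y : Ω → ℝ) (X : Ω → α) : Prop :=
  ∀ (g : ℝ → ℝ) (h : α → ℝ), Measurable g → Measurable h →
    (∃ C, ∀ x, |g x| ≤ C) → (∃ C, ∀ x, |h x| ≤ C) →
    μ[fun ω => g (Y ω) * h (X ω) | m]
      =ᵐ[μ] fun ω => (μ[fun ω' => g (Y ω') | m]) ω * (μ[fun ω' => h (X ω') | m]) ω


section Aux

open Filter

variable {Ω : Type*} [mΩ : MeasurableSpace Ω] {μ : Measure Ω} [IsProbabilityMeasure μ]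
  {m : MeasurableSpace Ω}

omit [IsProbabilityMeasure μ] in
lemma aux_int_mul {f g : Ω → ℝ} (hf : MemLp f 2 μ) (hg : MemLp g 2 μ) :
    Integrable (fun ω => f ω * g ω) μ := by
  refine Integrable.mono' ((hf.integrable_sq.add hg.integrable_sq).div_const 2)
    (hf.aestronglyMeasurable.mul hg.aestronglyMeasurable) (ae_of_all _ fun ω => ?_)
  have h := sq_nonneg (|f ω| - |g ω|)
  have hn : ‖f ω * g ω‖ = |f ω| * |g ω| := by rw [norm_mul]; rfl
  rw [hn, Pi.add_apply]
  nlinarith [sq_abs (f ω), sq_abs (g ω)]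

lemma hinge_key (hm : m ≤ mΩ) (e F G : Ω → ℝ)
    (he_meas : Measurable[mΩ] e) (he0 : ∀ ω, 0 ≤ e ω) (he1 : ∀ ω, e ω ≤ 1)
    (hF_meas : Measurable[mΩ] F) (hF0 : ∀ ω, 0 ≤ F ω) (hF_int : Integrable F μ)
    (hG_sm : StronglyMeasurable[m] G) (hG0 : ∀ ω, 0 ≤ G ω) (hG_int : Integrable G μ)
    (hGF : G ≤ᵐ[μ] μ[F|m])
    (hCI : ∀ n : ℕ, μ[fun ω => e ω * min (F ω) n|m] =ᵐ[μ]
        fun ω => (μ[e|m]) ω * (μ[fun ω' => min (F ω') n|m]) ω) :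
    ∫ ω, e ω * G ω ∂μ ≤ ∫ ω, e ω * F ω ∂μ := by
  set q : Ω → ℝ := μ[e|m] with hq
  have hq_sm : StronglyMeasurable[m] q := stronglyMeasurable_condExp
  have hq_aesm : AEStronglyMeasurable[mΩ] q μ := (hq_sm.mono hm).aestronglyMeasurable
  have he_int : Integrable e μ :=
    Integrable.mono' (integrable_const 1) (he_meas.aestronglyMeasurable (μ := μ))
      (ae_of_all _ fun ω => by rw [Real.norm_eq_abs, abs_of_nonneg (he0 ω)]; exact he1 ω)
  have hq0 : 0 ≤ᵐ[μ] q := condExp_nonneg (ae_of_all _ he0)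
  have hq1 : q ≤ᵐ[μ] fun _ => (1:ℝ) := by
    have h1 := condExp_mono (m := m) he_int (integrable_const 1) (ae_of_all _ he1)
    have h2 : μ[(fun _ => (1:ℝ))|m] = fun _ => (1:ℝ) := condExp_const hm 1
    filter_upwards [h1] with ω hω
    simpa [h2] using hω
  have hqbd : ∀ᵐ ω ∂μ, ‖q ω‖ ≤ 1 := by
    filter_upwards [hq0, hq1] with ω h0 h1
    rw [Real.norm_eq_abs, abs_of_nonneg h0]; exact h1
  have hmin_int : ∀ n : ℕ, Integrable (fun ω => min (F ω) n) μ :=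
    fun n => hF_int.inf (integrable_const _)
  have hebd : ∀ᵐ ω ∂μ, ‖e ω‖ ≤ 1 :=
    ae_of_all _ fun ω => by rw [Real.norm_eq_abs, abs_of_nonneg (he0 ω)]; exact he1 ω
  have heG_int : Integrable (fun ω => e ω * G ω) μ :=
    hG_int.bdd_mul (he_meas.aestronglyMeasurable (μ := μ)) hebd
  have hqF_int : Integrable (fun ω => q ω * F ω) μ := hF_int.bdd_mul hq_aesm hqbd
  have hqG_int : Integrable (fun ω => q ω * G ω) μ := hG_int.bdd_mul hq_aesm hqbd
  have key_n : ∀ n : ℕ, ∫ ω, e ω * min (F ω) n ∂μ = ∫ ω, q ω * min (F ω) n ∂μ := by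
    intro n
    have h1 : Integrable (fun ω => e ω * min (F ω) n) μ :=
      (hmin_int n).bdd_mul (he_meas.aestronglyMeasurable (μ := μ)) hebd
    have h2 : Integrable (fun ω => q ω * min (F ω) n) μ :=
      (hmin_int n).bdd_mul hq_aesm hqbd
    have hpull : μ[(fun ω => q ω * min (F ω) n)|m]
        =ᵐ[μ] fun ω => q ω * (μ[fun ω' => min (F ω') n|m]) ω :=
      condExp_mul_of_stronglyMeasurable_left hq_sm h2 (hmin_int n)
    calc ∫ ω, e ω * min (F ω) n ∂μ
        = ∫ ω, (μ[fun ω' => e ω' * min (F ω') n|m]) ω ∂μ := (integral_condExp hm).symm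
      _ = ∫ ω, q ω * (μ[fun ω' => min (F ω') n|m]) ω ∂μ := integral_congr_ae (hCI n)
      _ = ∫ ω, (μ[fun ω' => q ω' * min (F ω') n|m]) ω ∂μ := (integral_congr_ae hpull).symm
      _ = ∫ ω, q ω * min (F ω) n ∂μ := integral_condExp hm
  have htend : ∀ ω, Tendsto (fun n : ℕ => min (F ω) n) atTop (nhds (F ω)) := by
    intro ω
    refine tendsto_atTop_of_eventually_const (i₀ := ⌈F ω⌉₊) fun n hn => ?_
    exact min_eq_left ((Nat.ceil_le.mp hn))
  have lim1 : Tendsto (fun n : ℕ => ∫ ω, e ω * min (F ω) n ∂μ) atTop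
      (nhds (∫ ω, e ω * F ω ∂μ)) := by
    refine tendsto_integral_of_dominated_convergence F
      (fun n => ((he_meas.mul (hF_meas.min measurable_const))).aestronglyMeasurable)
      hF_int (fun n => ae_of_all _ fun ω => ?_) (ae_of_all _ fun ω => (htend ω).const_mul _)
    have h0 : (0:ℝ) ≤ min (F ω) n := le_min (hF0 ω) (Nat.cast_nonneg n)
    rw [Real.norm_eq_abs, abs_of_nonneg (mul_nonneg (he0 ω) h0)]
    calc e ω * min (F ω) n ≤ 1 * min (F ω) n := mul_le_mul_of_nonneg_right (he1 ω) h0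
      _ = min (F ω) n := one_mul _
      _ ≤ F ω := min_le_left _ _
  have lim2 : Tendsto (fun n : ℕ => ∫ ω, q ω * min (F ω) n ∂μ) atTop
      (nhds (∫ ω, q ω * F ω ∂μ)) := by
    refine tendsto_integral_of_dominated_convergence F
      (fun n => hq_aesm.mul (hF_meas.min measurable_const).aestronglyMeasurable)
      hF_int (fun n => ?_) (ae_of_all _ fun ω => (htend ω).const_mul _)
    filter_upwards [hq0, hq1] with ω h0 h1
    have hm0 : (0:ℝ) ≤ min (F ω) n := le_min (hF0 ω) (Nat.cast_nonneg n)
    rw [Real.norm_eq_abs, abs_of_nonneg (mul_nonneg h0 hm0)]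
    calc q ω * min (F ω) n ≤ 1 * min (F ω) n := mul_le_mul_of_nonneg_right h1 hm0
      _ = min (F ω) n := one_mul _
      _ ≤ F ω := min_le_left _ _
  have heqF : ∫ ω, e ω * F ω ∂μ = ∫ ω, q ω * F ω ∂μ :=
    tendsto_nhds_unique (by simpa only [key_n] using lim1) lim2
  have hpullF : μ[(fun ω => q ω * F ω)|m] =ᵐ[μ] fun ω => q ω * (μ[F|m]) ω :=
    condExp_mul_of_stronglyMeasurable_left hq_sm hqF_int hF_int
  have hcondF_int : Integrable (fun ω => q ω * (μ[F|m]) ω) μ :=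
    integrable_condExp.bdd_mul hq_aesm hqbd
  have stepB : ∫ ω, q ω * G ω ∂μ ≤ ∫ ω, q ω * F ω ∂μ := by
    have h1 : ∫ ω, q ω * F ω ∂μ = ∫ ω, q ω * (μ[F|m]) ω ∂μ := by
      rw [← integral_condExp hm (f := fun ω => q ω * F ω)]
      exact integral_congr_ae hpullF
    rw [h1]
    refine integral_mono_ae hqG_int hcondF_int ?_
    filter_upwards [hq0, hGF] with ω h0 h1
    exact mul_le_mul_of_nonneg_left h1 h0
  have stepC : ∫ ω, e ω * G ω ∂μ = ∫ ω, q ω * G ω ∂μ := by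
    have hGe_int : Integrable (fun ω => G ω * e ω) μ := by
      simpa [mul_comm] using heG_int
    have hpullG : μ[(fun ω => G ω * e ω)|m] =ᵐ[μ] fun ω => G ω * q ω :=
      condExp_mul_of_stronglyMeasurable_left hG_sm hGe_int he_int
    calc ∫ ω, e ω * G ω ∂μ = ∫ ω, G ω * e ω ∂μ := by simp_rw [mul_comm]
      _ = ∫ ω, (μ[fun ω' => G ω' * e ω'|m]) ω ∂μ := (integral_condExp hm).symm
      _ = ∫ ω, G ω * q ω ∂μ := integral_congr_ae hpullG
      _ = ∫ ω, q ω * G ω ∂μ := by simp_rw [mul_comm]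
  rw [stepC, heqF]
  exact stepB


lemma var_key (hm : m ≤ mΩ) (f g : Ω → ℝ) (hf2 : MemLp f 2 μ) (hg2 : MemLp g 2 μ)
    (hg_sm : StronglyMeasurable[m] g) (hmain : μ[f|m] =ᵐ[μ] g)
    (hf_mean : ∫ ω, f ω ∂μ = 0) (hg_mean : ∫ ω, g ω ∂μ = 0) :
    variance f μ - variance g μ = ∫ ω, (f ω - g ω)^2 ∂μ := by
  have hf_int : Integrable f μ := hf2.integrable one_le_two
  have hgf_int : Integrable (fun ω => g ω * f ω) μ := aux_int_mul (mΩ := mΩ) hg2 hf2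
  have hIfg : ∫ ω, g ω * f ω ∂μ = ∫ ω, g ω * g ω ∂μ := by
    have hpull : μ[(fun ω => g ω * f ω)|m] =ᵐ[μ] fun ω => g ω * (μ[f|m]) ω :=
      condExp_mul_of_stronglyMeasurable_left hg_sm hgf_int hf_int
    calc ∫ ω, g ω * f ω ∂μ = ∫ ω, (μ[fun ω' => g ω' * f ω'|m]) ω ∂μ :=
          (integral_condExp hm).symm
      _ = ∫ ω, g ω * (μ[f|m]) ω ∂μ := integral_congr_ae hpull
      _ = ∫ ω, g ω * g ω ∂μ := integral_congr_ae (by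
          filter_upwards [hmain] with ω hω; rw [hω])
  have ha : Integrable (fun ω => f ω^2 - 2*(g ω * f ω)) μ :=
    hf2.integrable_sq.sub (hgf_int.const_mul 2)
  have hsq : ∫ ω, (f ω - g ω)^2 ∂μ = (∫ ω, f ω^2 ∂μ) - ∫ ω, g ω^2 ∂μ := by
    have h1 : (fun ω => (f ω - g ω)^2)
        = fun ω => (f ω^2 - 2*(g ω * f ω)) + g ω^2 := funext fun ω => by ring
    rw [h1, integral_add ha hg2.integrable_sq,
      integral_sub hf2.integrable_sq (hgf_int.const_mul 2), integral_const_mul, hIfg]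
    have h5 : ∫ ω, g ω * g ω ∂μ = ∫ ω, g ω^2 ∂μ :=
      integral_congr_ae (ae_of_all _ fun ω => (sq (g ω)).symm)
    rw [h5]; ring
  rw [variance_eq_sub hf2, variance_eq_sub hg2]
  have h3 : μ[f^2] = ∫ ω, f ω^2 ∂μ := rfl
  have h4 : μ[g^2] = ∫ ω, g ω^2 ∂μ := rfl
  have h1 : μ[f] = 0 := hf_mean
  have h2 : μ[g] = 0 := hg_mean
  rw [h1, h2, h3, h4, hsq]; ring

lemma hinge_cond_lb (hm : m ≤ mΩ) (c t : ℝ) (f g : Ω → ℝ)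
    (hf_int : Integrable f μ)
    (hint1 : Integrable (fun ω => max (1 - c * (f ω - t)) 0) μ)
    (hmain : μ[f|m] =ᵐ[μ] g) :
    (fun ω => max (1 - c * (g ω - t)) 0)
      ≤ᵐ[μ] μ[(fun ω => max (1 - c * (f ω - t)) 0)|m] := by
  have hlin : μ[(fun ω => (1 + c*t) - c * f ω)|m] =ᵐ[μ] fun ω => (1 + c*t) - c * g ω := by
    have h1 := condExp_sub (m := m) (μ := μ) (integrable_const ((1:ℝ) + c*t))
      (hf_int.const_mul c)
    have h2 : μ[(fun _ => (1 + c*t) : Ω → ℝ)|m] = fun _ => (1 + c*t) :=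
      condExp_const hm _
    have h3 : μ[(fun ω => c * f ω)|m] =ᵐ[μ] fun ω => c * g ω := by
      have h4 := condExp_smul (μ := μ) (m := m) c f
      have h5 : μ[(fun ω => c * f ω)|m] = μ[c • f|m] := rfl
      rw [h5]
      refine h4.trans ?_
      filter_upwards [hmain] with ω hω
      simp [hω]
    have h6 : μ[(fun ω => (1 + c*t) - c * f ω)|m]
        = μ[(fun _ => (1 + c*t) : Ω → ℝ) - (fun ω => c * f ω)|m] := rfl
    rw [h6]
    refine h1.trans ?_
    filter_upwards [h3] with ω hω
    simp only [Pi.sub_apply, h2, hω]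
  have hmono : μ[(fun ω => (1 + c*t) - c * f ω)|m]
      ≤ᵐ[μ] μ[(fun ω => max (1 - c * (f ω - t)) 0)|m] := by
    refine condExp_mono ((integrable_const _).sub (hf_int.const_mul c)) hint1
      (ae_of_all _ fun ω => ?_)
    show (1 + c*t) - c * f ω ≤ max (1 - c * (f ω - t)) 0
    have he : (1 + c*t) - c * f ω = 1 - c * (f ω - t) := by ring
    rw [he]
    exact le_max_left _ _
  have hnn : (fun _ => (0:ℝ)) ≤ᵐ[μ] μ[(fun ω => max (1 - c * (f ω - t)) 0)|m] :=
    condExp_nonneg (ae_of_all _ fun ω => le_max_right _ _)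
  filter_upwards [hlin, hmono, hnn] with ω h1 h2 h3
  have h4 : 1 - c * (g ω - t) ≤ (μ[(fun ω => max (1 - c * (f ω - t)) 0)|m]) ω := by
    rw [h1] at h2
    calc 1 - c * (g ω - t) = (1 + c*t) - c * g ω := by ring
      _ ≤ _ := h2
  exact max_le h4 h3

end Aux

lemma tcontract_reduce {K : ℕ} {d r : Fin K → ℕ} (T : ((k : Fin K) → Fin (d k)) → ℝ)
    (U : (k : Fin K) → Matrix (Fin (d k)) (Fin (r k)) ℝ) (η : (k : Fin K) → Fin (r k) → ℝ) :
    tcontract T (fun k => (U k).mulVec (η k)) = tcontract (reduceTensor T U) η := by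
  unfold tcontract reduceTensor
  simp only [Matrix.mulVec, dotProduct]
  simp_rw [Fintype.prod_sum, Finset.mul_sum, Finset.sum_mul]
  rw [Finset.sum_comm]
  congr 1; funext j; congr 1; funext i
  rw [Finset.prod_mul_distrib, mul_assoc]

lemma tcontract_meas {K : ℕ} {d : Fin K → ℕ} (u : (k : Fin K) → Fin (d k) → ℝ) :
    Measurable (fun T : ((k : Fin K) → Fin (d k)) → ℝ => tcontract T u) := by
  unfold tcontract
  exact Finset.measurable_sum _ fun i _ => (measurable_pi_apply i).mul_const _

section AuxMain
variable {Ω : Type*} [mΩ : MeasurableSpace Ω] {μ : Measure Ω} [IsProbabilityMeasure μ]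
  {K : ℕ} {d : Fin K → ℕ}

omit [IsProbabilityMeasure μ] in
lemma tcontract_memLp (X : Ω → ((k : Fin K) → Fin (d k)) → ℝ)
    (hXL2 : ∀ i, MemLp (fun ω => X ω i) 2 μ) (v : (k : Fin K) → Fin (d k) → ℝ) :
    MemLp (fun ω => tcontract (X ω) v) 2 μ := by
  have h := memLp_finset_sum (μ := μ) (p := 2) Finset.univ
    (f := fun i ω => (∏ k, v k (i k)) * X ω i) (fun i _ => (hXL2 i).const_mul _)
  have he : (fun ω => tcontract (X ω) v)
      = fun ω => ∑ i : (k : Fin K) → Fin (d k), (∏ k, v k (i k)) * X ω i := by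
    funext ω; simp [tcontract, mul_comm]
  rw [he]
  simpa using h

lemma tcontract_mean (X : Ω → ((k : Fin K) → Fin (d k)) → ℝ)
    (hXL2 : ∀ i, MemLp (fun ω => X ω i) 2 μ)
    (hXmean : ∀ i, ∫ ω, X ω i ∂μ = 0) (v : (k : Fin K) → Fin (d k) → ℝ) :
    ∫ ω, tcontract (X ω) v ∂μ = 0 := by
  simp only [tcontract]
  rw [integral_finset_sum _ (fun i _ => ((hXL2 i).integrable one_le_two).mul_const _)]
  simp [integral_mul_const, hXmean]

end AuxMain

/-- **Key inequality in the proof of Theorem 3 (PSTM).** If `Y ⫫ X | σ(W)` with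
`W = X ×₁ U₁ᵀ ⋯ ×_K U_Kᵀ` and `E[⟨X; u₁,…,u_K⟩ | σ(W)] = ⟨X; U₁η₁,…,U_Kη_K⟩` a.s., then
`L(u₁,…,u_K,t) ≥ L(U₁η₁,…,U_Kη_K,t)`, strictly if moreover
`E[(⟨X; u₁,…,u_K⟩ − E[⟨X; u₁,…,u_K⟩ | σ(W)])²] > 0`. -/
theorem stmt_14 {Ω : Type*} [MeasurableSpace Ω] {μ : Measure Ω} [IsProbabilityMeasure μ]
    {K : ℕ} (hK : 1 ≤ K) {d r : Fin K → ℕ}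
    (X : Ω → ((k : Fin K) → Fin (d k)) → ℝ) (hX : Measurable X)
    (hXL2 : ∀ i, MemLp (fun ω => X ω i) 2 μ)
    (hXmean : ∀ i, ∫ ω, X ω i ∂μ = 0)
    (Y : Ω → ℝ) (hY : Measurable Y)
    (A₁ A₂ : Set ℝ) (hA₁ : MeasurableSet A₁) (hA₂ : MeasurableSet A₂)
    (hdisj : Disjoint A₁ A₂)
    (lam : ℝ) (hlam : 0 ≤ lam)
    (U : (k : Fin K) → Matrix (Fin (d k)) (Fin (r k)) ℝ)
    (u : (k : Fin K) → Fin (d k) → ℝ) (t : ℝ)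
    (η : (k : Fin K) → Fin (r k) → ℝ)
    (hCI : CondIndepBdd μ
      (MeasurableSpace.comap (fun ω => reduceTensor (X ω) U) inferInstance) Y X)
    (hmultilin : μ[fun ω => tcontract (X ω) u |
        MeasurableSpace.comap (fun ω => reduceTensor (X ω) U) inferInstance]
      =ᵐ[μ] fun ω => tcontract (X ω) (fun k => (U k).mulVec (η k))) :
    PSTMobj μ X (sliceLabel A₁ A₂ Y) lam (fun k => (U k).mulVec (η k)) t
      ≤ PSTMobj μ X (sliceLabel A₁ A₂ Y) lam u t ∧
    (0 < ∫ ω, (tcontract (X ω) u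
        - (μ[fun ω' => tcontract (X ω') u |
            MeasurableSpace.comap (fun ω' => reduceTensor (X ω') U) inferInstance]) ω) ^ 2 ∂μ →
      PSTMobj μ X (sliceLabel A₁ A₂ Y) lam (fun k => (U k).mulVec (η k)) t
        < PSTMobj μ X (sliceLabel A₁ A₂ Y) lam u t) := by
  classical
  rename_i mΩ _hPM
  -- basic objects
  set f : Ω → ℝ := fun ω => tcontract (X ω) u with hfdef
  set g : Ω → ℝ := fun ω => tcontract (X ω) (fun k => (U k).mulVec (η k)) with hgdef
  have hf2 : MemLp f 2 μ := tcontract_memLp X hXL2 u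
  have hg2 : MemLp g 2 μ := tcontract_memLp X hXL2 _
  have hf_int : Integrable f μ := hf2.integrable one_le_two
  have hg_int : Integrable g μ := hg2.integrable one_le_two
  have hf_mean : ∫ ω, f ω ∂μ = 0 := tcontract_mean X hXL2 hXmean u
  have hg_mean : ∫ ω, g ω ∂μ = 0 := tcontract_mean X hXL2 hXmean _
  -- ambient measurability facts (before introducing the sub-σ-algebra)
  have hW_meas : Measurable (fun ω => reduceTensor (X ω) U) := by
    apply measurable_pi_lambda
    intro j
    exact Finset.measurable_sum _ fun i _ => ((measurable_pi_apply i).comp hX).mul_const _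
  have hfm : Measurable f := (tcontract_meas u).comp hX
  set e₁ : Ω → ℝ := fun ω => A₁.indicator 1 (Y ω) with he₁def
  set e₂ : Ω → ℝ := fun ω => A₂.indicator 1 (Y ω) with he₂def
  have he₁_meas : Measurable e₁ := (measurable_one.indicator hA₁).comp hY
  have he₂_meas : Measurable e₂ := (measurable_one.indicator hA₂).comp hY
  have hHfm : ∀ c : ℝ, Measurable (fun ω => max (1 - c * (f ω - t)) 0) :=
    fun c => (((hfm.sub_const t).const_mul c).const_sub 1).max measurable_const
  -- the sub-σ-algebra
  set m : MeasurableSpace Ω :=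
    MeasurableSpace.comap (fun ω => reduceTensor (X ω) U) inferInstance with hmdef
  have hm : m ≤ mΩ := by
    rintro s ⟨s', hs', rfl⟩
    exact hW_meas hs'
  have hg_sm : StronglyMeasurable[m] g := by
    have h1 : Measurable[m] (fun ω => reduceTensor (X ω) U) := Measurable.of_comap_le le_rfl
    have h2 : g = (fun T => tcontract T η) ∘ (fun ω => reduceTensor (X ω) U) := by
      funext ω; exact tcontract_reduce _ _ _
    rw [h2]
    exact ((tcontract_meas η).comp h1).stronglyMeasurable
  have hmain : μ[f|m] =ᵐ[μ] g := hmultilin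
  -- variance part
  have hvar : variance f μ - variance g μ = ∫ ω, (f ω - g ω)^2 ∂μ :=
    var_key (mΩ := mΩ) hm f g hf2 hg2 hg_sm hmain hf_mean hg_mean
  have hvar_le : variance g μ ≤ variance f μ := by
    have h := integral_nonneg (μ := μ) (f := fun ω => (f ω - g ω)^2) fun ω => sq_nonneg _
    linarith [hvar]
  -- hinge part
  have hind01 : ∀ (A : Set ℝ) (x : ℝ), 0 ≤ A.indicator (1 : ℝ → ℝ) x ∧
      A.indicator (1 : ℝ → ℝ) x ≤ 1 := by
    intro A x
    by_cases h : x ∈ A <;> simp [h]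
  have hhinge_int : ∀ (c : ℝ) (h : Ω → ℝ), Integrable h μ →
      Integrable (fun ω => max (1 - c * (h ω - t)) 0) μ := by
    intro c h hint
    have h2 : Integrable ((fun ω => 1 - c * (h ω - t)) ⊔ (fun _ => (0:ℝ))) μ :=
      ((integrable_const 1).sub (((hint.sub (integrable_const t))).const_mul c)).sup
        (integrable_const 0)
    exact h2
  have hIfp : Integrable (fun ω => max (1 - (f ω - t)) 0) μ := by
    have := hhinge_int 1 f hf_int; simpa using this
  have hIfn : Integrable (fun ω => max (1 + (f ω - t)) 0) μ := by
    have := hhinge_int (-1) f hf_int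
    simp only [neg_one_mul, sub_neg_eq_add] at this
    exact this
  have hIgp : Integrable (fun ω => max (1 - (g ω - t)) 0) μ := by
    have := hhinge_int 1 g hg_int; simpa using this
  have hIgn : Integrable (fun ω => max (1 + (g ω - t)) 0) μ := by
    have := hhinge_int (-1) g hg_int
    simp only [neg_one_mul, sub_neg_eq_add] at this
    exact this
  have hcond_lb : ∀ c : ℝ, (fun ω => max (1 - c * (g ω - t)) 0)
      ≤ᵐ[μ] μ[(fun ω => max (1 - c * (f ω - t)) 0)|m] :=
    fun c => hinge_cond_lb (mΩ := mΩ) hm c t f g hf_int (hhinge_int c f hf_int) hmain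
  have happly : ∀ (A : Set ℝ), MeasurableSet A → ∀ c : ℝ,
      (∫ ω, A.indicator 1 (Y ω) * max (1 - c * (g ω - t)) 0 ∂μ)
        ≤ ∫ ω, A.indicator 1 (Y ω) * max (1 - c * (f ω - t)) 0 ∂μ := by
    intro A hA c
    refine hinge_key (mΩ := mΩ) hm (fun ω => A.indicator 1 (Y ω))
      (fun ω => max (1 - c * (f ω - t)) 0) (fun ω => max (1 - c * (g ω - t)) 0)
      ((measurable_one.indicator hA).comp hY)
      (fun ω => (hind01 A (Y ω)).1) (fun ω => (hind01 A (Y ω)).2)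
      (hHfm c) (fun ω => le_max_right _ _) (hhinge_int c f hf_int)
      ?_ (fun ω => le_max_right _ _) (hhinge_int c g hg_int)
      (hcond_lb c) ?_
    · have h1 : Measurable[m] g := hg_sm.measurable
      exact ((((h1.sub_const t).const_mul c).const_sub 1).max measurable_const).stronglyMeasurable
    · intro n
      exact hCI (fun y => A.indicator 1 y)
        (fun x => min (max (1 - c * (tcontract x u - t)) 0) n)
        (measurable_one.indicator hA)
        (((((tcontract_meas u).sub_const t).const_mul c).const_sub 1).max
          measurable_const |>.min measurable_const)
        ⟨1, fun x => by
          rcases hind01 A x with ⟨h0, h1⟩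
          rw [abs_of_nonneg h0]; exact h1⟩
        ⟨n, fun x => by
          have h0 : (0:ℝ) ≤ min (max (1 - c * (tcontract x u - t)) 0) n :=
            le_min (le_max_right _ _) (Nat.cast_nonneg n)
          rw [abs_of_nonneg h0]
          exact min_le_right _ _⟩
  have hpt : ∀ (h : Ω → ℝ) (ω : Ω), max (1 - sliceLabel A₁ A₂ Y ω * (h ω - t)) 0
      = e₁ ω * max (1 - (h ω - t)) 0 + e₂ ω * max (1 + (h ω - t)) 0
        + (1 - e₁ ω - e₂ ω) := by
    intro h ω
    simp only [sliceLabel, he₁def, he₂def]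
    by_cases h1 : Y ω ∈ A₁
    · have h2 : Y ω ∉ A₂ := fun h2 => (Set.disjoint_left.mp hdisj h1 h2).elim
      simp [Set.indicator_of_mem, Set.indicator_of_notMem, h1, h2]
    · by_cases h2 : Y ω ∈ A₂
      · simp only [Set.indicator_of_notMem h1, Set.indicator_of_mem h2, Pi.one_apply]
        rw [show (0:ℝ) - 1 = -1 by ring, show (1:ℝ) - -1 * (h ω - t) = 1 + (h ω - t) by ring]
        ring
      · simp [Set.indicator_of_notMem, h1, h2]
  have hsplit : ∀ (h : Ω → ℝ),
      Integrable (fun ω => max (1 - (h ω - t)) 0) μ →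
      Integrable (fun ω => max (1 + (h ω - t)) 0) μ →
      ∫ ω, max (1 - sliceLabel A₁ A₂ Y ω * (h ω - t)) 0 ∂μ
      = (∫ ω, e₁ ω * max (1 - (h ω - t)) 0 ∂μ)
        + (∫ ω, e₂ ω * max (1 + (h ω - t)) 0 ∂μ)
        + ∫ ω, (1 - e₁ ω - e₂ ω) ∂μ := by
    intro h hp hm'
    have hb₁ : ∀ᵐ ω ∂μ, ‖e₁ ω‖ ≤ 1 := ae_of_all _ fun ω => by
      rw [Real.norm_eq_abs, abs_of_nonneg (hind01 A₁ (Y ω)).1]; exact (hind01 A₁ (Y ω)).2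
    have hb₂ : ∀ᵐ ω ∂μ, ‖e₂ ω‖ ≤ 1 := ae_of_all _ fun ω => by
      rw [Real.norm_eq_abs, abs_of_nonneg (hind01 A₂ (Y ω)).1]; exact (hind01 A₂ (Y ω)).2
    have hi1 : Integrable (fun ω => e₁ ω * max (1 - (h ω - t)) 0) μ :=
      hp.bdd_mul he₁_meas.aestronglyMeasurable hb₁
    have hi2 : Integrable (fun ω => e₂ ω * max (1 + (h ω - t)) 0) μ :=
      hm'.bdd_mul he₂_meas.aestronglyMeasurable hb₂
    have hi3 : Integrable (fun ω => 1 - e₁ ω - e₂ ω) μ := by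
      refine Integrable.mono' (integrable_const 3)
        (((he₁_meas.const_sub 1).sub he₂_meas).aestronglyMeasurable)
        (ae_of_all _ fun ω => ?_)
      rcases hind01 A₁ (Y ω) with ⟨a0, a1⟩
      rcases hind01 A₂ (Y ω) with ⟨b0, b1⟩
      rw [Real.norm_eq_abs, abs_le]
      constructor
      · simp only [he₁def, he₂def]; nlinarith
      · simp only [he₁def, he₂def]; nlinarith
    calc ∫ ω, max (1 - sliceLabel A₁ A₂ Y ω * (h ω - t)) 0 ∂μ
        = ∫ ω, (e₁ ω * max (1 - (h ω - t)) 0 + e₂ ω * max (1 + (h ω - t)) 0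
            + (1 - e₁ ω - e₂ ω)) ∂μ :=
          integral_congr_ae (ae_of_all _ fun ω => hpt h ω)
      _ = _ := by
          have hi12 : Integrable (fun ω => e₁ ω * max (1 - (h ω - t)) 0
              + e₂ ω * max (1 + (h ω - t)) 0) μ := hi1.add hi2
          rw [integral_add hi12 hi3, integral_add hi1 hi2]
  have hinge_le : ∫ ω, max (1 - sliceLabel A₁ A₂ Y ω * (g ω - t)) 0 ∂μ
      ≤ ∫ ω, max (1 - sliceLabel A₁ A₂ Y ω * (f ω - t)) 0 ∂μ := by
    rw [hsplit f hIfp hIfn, hsplit g hIgp hIgn]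
    have h1 := happly A₁ hA₁ 1
    have h2 := happly A₂ hA₂ (-1)
    simp only [one_mul] at h1
    simp only [neg_one_mul, sub_neg_eq_add] at h2
    exact add_le_add (add_le_add h1 h2) le_rfl
  have hobj : ∀ v : (k : Fin K) → Fin (d k) → ℝ,
      @PSTMobj Ω mΩ K d μ X (sliceLabel A₁ A₂ Y) lam v t
      = variance (fun ω => tcontract (X ω) v) μ
        + lam * ∫ ω, max (1 - sliceLabel A₁ A₂ Y ω * (tcontract (X ω) v - t)) 0 ∂μ :=
    fun v => rfl
  have hle : @PSTMobj Ω mΩ K d μ X (sliceLabel A₁ A₂ Y) lam (fun k => (U k).mulVec (η k)) t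
      ≤ @PSTMobj Ω mΩ K d μ X (sliceLabel A₁ A₂ Y) lam u t := by
    rw [hobj, hobj]
    exact add_le_add hvar_le (mul_le_mul_of_nonneg_left hinge_le hlam)
  refine ⟨hle, fun hpos => ?_⟩
  have heq : ∫ ω, (f ω - (μ[f|m]) ω) ^ 2 ∂μ = ∫ ω, (f ω - g ω)^2 ∂μ := by
    apply integral_congr_ae
    filter_upwards [hmain] with ω hω
    rw [hω]
  have hpos' : 0 < ∫ ω, (f ω - g ω)^2 ∂μ := by
    rw [← heq]; exact hpos
  have hvar_lt : variance g μ < variance f μ := by linarith [hvar]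
  rw [hobj, hobj]
  exact add_lt_add_of_lt_of_le hvar_lt (mul_le_mul_of_nonneg_left hinge_le hlam)
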